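/- For all real x > 0, the Mellin–Barnes representation Ei(-x) = -(1/(2πi)) ∫_{c-i∞}^{c+i∞} x^(-s) Γ(s)/s ds holds for any c > 0, where the contour integral is the limit of integrals over vertical segments. -/

import Mathlib

open MeasureTheory Set


open Filter Topology

namespace EiAux

noncomputable def Fr (t : ℝ) : ℝ := ∫ u in Ioi t, Real.exp (-u) / u

lemma integrableOn_g {t : ℝ} (ht : 0 < t) :
    IntegrableOn (fun u => Real.exp (-u) / u) (Ioi t) := by
  have hb : IntegrableOn (fun u => t⁻¹ * Real.exp (-u)) (Ioi t) := by
    have := (exp_neg_integrableOn_Ioi t one_pos).const_mul t⁻¹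
    simp only [neg_mul, one_mul] at this; exact this
  refine Integrable.mono' hb ?_ ?_
  · exact (Measurable.div (Real.measurable_exp.comp measurable_neg) measurable_id).aestronglyMeasurable
  · filter_upwards [ae_restrict_mem measurableSet_Ioi] with u hu
    have hu0 : 0 < u := ht.trans hu
    rw [Real.norm_eq_abs, abs_of_nonneg (by positivity : (0:ℝ) ≤ Real.exp (-u) / u),
      inv_mul_eq_div]
    exact div_le_div_of_nonneg_left (Real.exp_pos _).le ht hu.le

lemma Fr_nonneg {t : ℝ} (ht : 0 < t) : 0 ≤ Fr t :=
  setIntegral_nonneg measurableSet_Ioi fun u hu => by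
    have : 0 < u := ht.trans hu; positivity

lemma Fr_le_rpow {a t : ℝ} (ha0 : 0 < a) (ha1 : a < 1) (ht : 0 < t) :
    Fr t ≤ Real.Gamma (1 - a) * t ^ (a - 1) := by
  have hga : (0:ℝ) < 1 - a := by linarith
  have hint : IntegrableOn (fun u : ℝ => Real.exp (-u) * u ^ (-a)) (Ioi 0) := by
    have := Real.GammaIntegral_convergent hga
    simpa using this
  have step1 : Fr t ≤ ∫ u in Ioi t, t ^ (a-1) * (Real.exp (-u) * u ^ (-a)) := by
    refine setIntegral_mono_on ?_ (((hint.mono_set (Ioi_subset_Ioi ht.le)).const_mul _)) measurableSet_Ioi ?_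
    · exact integrableOn_g ht
    · intro u hu
      have hu0 : 0 < u := ht.trans hu
      have h1 : u ^ (a-1) ≤ t ^ (a-1) :=
        Real.rpow_le_rpow_of_nonpos ht hu.le (by linarith)
      calc Real.exp (-u) / u = Real.exp (-u) * (u ^ (a-1) * u ^ (-a)) := by
            rw [← Real.rpow_add hu0]
            rw [div_eq_mul_inv]
            congr 1
            rw [show a - 1 + -a = -1 by ring, Real.rpow_neg_one]
        _ ≤ Real.exp (-u) * (t ^ (a-1) * u ^ (-a)) := by
            have := mul_le_mul_of_nonneg_right h1 (Real.rpow_nonneg hu0.le (-a))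
            nlinarith [Real.exp_pos (-u), Real.rpow_nonneg hu0.le (-a)]
        _ = t ^ (a-1) * (Real.exp (-u) * u ^ (-a)) := by ring
  have step2 : (∫ u in Ioi t, t ^ (a-1) * (Real.exp (-u) * u ^ (-a)))
      ≤ ∫ u in Ioi 0, t ^ (a-1) * (Real.exp (-u) * u ^ (-a)) := by
    refine setIntegral_mono_set (hint.const_mul _) ?_ (HasSubset.Subset.eventuallyLE (Ioi_subset_Ioi ht.le))
    filter_upwards [ae_restrict_mem measurableSet_Ioi] with u hu
    have : 0 < u := hu
    positivity
  refine step1.trans (step2.trans ?_)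
  rw [MeasureTheory.integral_const_mul, Real.Gamma_eq_integral hga, mul_comm]
  gcongr ?_ * _
  apply le_of_eq
  refine setIntegral_congr_fun measurableSet_Ioi fun u hu => ?_
  norm_num

lemma Fr_le_exp {t : ℝ} (ht : 1 ≤ t) : Fr t ≤ Real.exp (-t) := by
  have ht0 : (0:ℝ) < t := lt_of_lt_of_le one_pos ht
  have h1 : Fr t ≤ ∫ u in Ioi t, Real.exp (-u) := by
    refine setIntegral_mono_on (integrableOn_g ht0) ?_ measurableSet_Ioi ?_
    · have := exp_neg_integrableOn_Ioi t one_pos; simpa using this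
    · intro u hu
      exact div_le_self (Real.exp_pos _).le (ht.trans hu.le)
  rwa [integral_exp_neg_Ioi] at h1

lemma Fr_hasDerivAt {t : ℝ} (ht : 0 < t) :
    HasDerivAt Fr (-(Real.exp (-t) / t)) t := by
  set t0 := t / 2 with ht0def
  have ht0 : 0 < t0 := by positivity
  have htt0 : t0 < t := by simp [ht0def]; linarith
  have hcont : ContinuousOn (fun u : ℝ => Real.exp (-u) / u) (Ioi 0) := by
    refine ContinuousOn.div (Continuous.continuousOn (by continuity)) continuousOn_id ?_
    exact fun u hu => ne_of_gt hu
  have heq : ∀ x ∈ Ioi t0, Fr x = Fr t0 - ∫ u in t0..x, Real.exp (-u) / u := by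
    intro x hx
    have hx0 : 0 < x := ht0.trans hx
    have hsplit : Fr t0 = (∫ u in Ioc t0 x, Real.exp (-u) / u) + Fr x := by
      rw [Fr, Fr, ← setIntegral_union (Ioc_disjoint_Ioi le_rfl) measurableSet_Ioi
        ((integrableOn_g ht0).mono_set Ioc_subset_Ioi_self) (integrableOn_g hx0),
        Ioc_union_Ioi_eq_Ioi (le_of_lt hx)]
    rw [intervalIntegral.integral_of_le (le_of_lt hx)]
    have := hsplit
    linarith [hsplit]
  have hderiv : HasDerivAt (fun x => Fr t0 - ∫ u in t0..x, Real.exp (-u) / u)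
      (-(Real.exp (-t) / t)) t := by
    have hii : IntervalIntegrable (fun u : ℝ => Real.exp (-u) / u) volume t0 t := by
      apply ContinuousOn.intervalIntegrable
      apply hcont.mono
      rw [uIcc_of_le htt0.le]
      intro u hu; exact lt_of_lt_of_le ht0 hu.1
    have h2 := intervalIntegral.integral_hasDerivAt_right hii
      (hcont.stronglyMeasurableAtFilter isOpen_Ioi t ht)
      ((hcont.continuousAt (Ioi_mem_nhds ht)))
    simpa using (h2.const_sub (Fr t0))
  exact hderiv.congr_of_eventuallyEq
    (eventuallyEq_of_mem (Ioi_mem_nhds htt0) heq)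

lemma contOn (s : ℂ) : ContinuousOn (fun t : ℝ => (t:ℂ)^(s-1) * (Fr t : ℂ)) (Ioi 0) := by
  intro t ht
  apply ContinuousWithinAt.mul
  · exact ((continuousAt_cpow_const (Complex.ofReal_mem_slitPlane.2 ht)).comp
      Complex.continuous_ofReal.continuousAt).continuousWithinAt
  · exact (Complex.continuous_ofReal.continuousAt.comp
      (Fr_hasDerivAt ht).continuousAt).continuousWithinAt

lemma norm_integrand {s : ℂ} {t : ℝ} (ht : 0 < t) :
    ‖(t:ℂ)^(s-1) * (Fr t : ℂ)‖ = t ^ (s.re - 1) * Fr t := by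
  rw [norm_mul,
    Complex.norm_cpow_eq_rpow_re_of_pos ht, Complex.norm_real, Real.norm_eq_abs,
    abs_of_nonneg (Fr_nonneg ht), Complex.sub_re, Complex.one_re]

lemma mellin_integrable {s : ℂ} (hs : 0 < s.re) :
    IntegrableOn (fun t : ℝ => (t:ℂ)^(s-1) * (Fr t:ℂ)) (Ioi 0) := by
  set a : ℝ := 1 - min s.re 1 / 2 with ha_def
  have ha0 : 0 < a := by
    have : min s.re 1 ≤ 1 := min_le_right _ _
    simp only [ha_def]; linarith
  have ha1 : a < 1 := by
    have : 0 < min s.re 1 := lt_min hs one_pos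
    simp only [ha_def]; linarith
  have hkey : 0 < s.re + a - 1 := by
    have : min s.re 1 ≤ s.re := min_le_left _ _
    have h2 : 0 < min s.re 1 := lt_min hs one_pos
    simp only [ha_def]; linarith
  rw [← Ioc_union_Ioi_eq_Ioi (zero_le_one (α := ℝ)), integrableOn_union]
  constructor
  · refine Integrable.mono' (g := fun t => Real.Gamma (1-a) * t ^ (s.re + a - 2))
      ?_ (((contOn s).mono Ioc_subset_Ioi_self).aestronglyMeasurable measurableSet_Ioc) ?_
    · have := (intervalIntegral.intervalIntegrable_rpow' (a := 0) (b := 1)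
        (r := s.re + a - 2) (by linarith)).1
      exact this.const_mul _
    · filter_upwards [ae_restrict_mem measurableSet_Ioc] with t ht
      rw [norm_integrand ht.1]
      calc t ^ (s.re - 1) * Fr t ≤ t ^ (s.re - 1) * (Real.Gamma (1-a) * t ^ (a-1)) := by
            have := Fr_le_rpow ha0 ha1 ht.1
            have h0 : (0:ℝ) ≤ t ^ (s.re - 1) := Real.rpow_nonneg ht.1.le _
            nlinarith
        _ = Real.Gamma (1-a) * t ^ (s.re + a - 2) := by
            rw [show t ^ (s.re-1) * (Real.Gamma (1-a) * t^(a-1)) =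
              Real.Gamma (1-a) * (t^(s.re-1) * t^(a-1)) from by ring, ← Real.rpow_add ht.1]
            ring_nf
  · refine Integrable.mono' (g := fun t => Real.exp (-t) * t ^ (s.re - 1))
      ((Real.GammaIntegral_convergent hs).mono_set (Ioi_subset_Ioi zero_le_one))
      (((contOn s).mono (Ioi_subset_Ioi zero_le_one)).aestronglyMeasurable measurableSet_Ioi) ?_
    filter_upwards [ae_restrict_mem measurableSet_Ioi] with t ht
    have ht0 : (0:ℝ) < t := lt_of_le_of_lt zero_le_one ht
    rw [norm_integrand ht0, mul_comm (Real.exp (-t))]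
    have := Fr_le_exp ht.le
    have h0 : (0:ℝ) ≤ t ^ (s.re - 1) := Real.rpow_nonneg ht0.le _
    nlinarith

lemma mellin_value {s : ℂ} (hs : 0 < s.re) :
    ∫ t : ℝ in Ioi 0, (t:ℂ)^(s-1) * (Fr t:ℂ) = Complex.Gamma s / s := by
  have hs0 : s ≠ 0 := fun h => by simp [h] at hs
  set a : ℝ := 1 - min s.re 1 / 2 with ha_def
  have ha0 : 0 < a := by
    have : min s.re 1 ≤ 1 := min_le_right _ _
    simp only [ha_def]; linarith
  have ha1 : a < 1 := by
    have : 0 < min s.re 1 := lt_min hs one_pos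
    simp only [ha_def]; linarith
  have hkey : 0 < s.re + a - 1 := by
    have : min s.re 1 ≤ s.re := min_le_left _ _
    have h2 : 0 < min s.re 1 := lt_min hs one_pos
    simp only [ha_def]; linarith
  set G : ℝ → ℂ := fun t => if 0 < t then (t:ℂ)^s / s * (Fr t : ℂ) else 0 with hGdef
  set G' : ℝ → ℂ := fun t => (t:ℂ)^(s-1) * (Fr t:ℂ) - (t:ℂ)^(s-1) * Real.exp (-t) / s
    with hG'def
  -- integrability of G'
  have hgamma : IntegrableOn (fun t : ℝ => (t:ℂ)^(s-1) * Real.exp (-t) / s) (Ioi 0) := by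
    have h0 : IntegrableOn (fun x : ℝ => (Real.exp (-x) : ℂ) * (x:ℂ) ^ (s-1) / s) (Ioi 0) :=
      (Complex.GammaIntegral_convergent hs).div_const s
    refine h0.congr_fun (fun t ht => ?_) measurableSet_Ioi
    push_cast
    ring
  have hG'int : IntegrableOn G' (Ioi 0) := (mellin_integrable hs).sub hgamma
  -- norm bound for G
  have hGnorm : ∀ t : ℝ, 0 < t → ‖G t‖ = t ^ s.re / ‖s‖ * Fr t := by
    intro t ht
    simp only [hGdef, if_pos ht]
    rw [norm_mul, norm_div,
      Complex.norm_cpow_eq_rpow_re_of_pos ht, Complex.norm_real,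
      Real.norm_eq_abs, abs_of_nonneg (Fr_nonneg ht)]
  -- limit of G at 0⁺
  have hG0 : ContinuousWithinAt G (Ici 0) 0 := by
    rw [ContinuousWithinAt]
    have hG00 : G 0 = 0 := by simp [hGdef]
    rw [hG00]
    rw [show (0:ℂ) = 0 from rfl]
    apply squeeze_zero_norm' (a := fun t => Real.Gamma (1-a) / ‖s‖ * t ^ (s.re + a - 1))
    · filter_upwards [self_mem_nhdsWithin] with t (ht : t ∈ Ici 0)
      rcases eq_or_lt_of_le (ht.out) with h | h
      · rw [← h]
        simp only [hGdef, if_neg (lt_irrefl (0:ℝ))]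
        rw [norm_zero, Real.zero_rpow (by linarith), mul_zero]
      · rw [hGnorm t h]
        have hb := Fr_le_rpow ha0 ha1 h
        have h1 : (0:ℝ) ≤ t ^ s.re / ‖s‖ := by positivity
        calc t ^ s.re / ‖s‖ * Fr t ≤ t ^ s.re / ‖s‖ * (Real.Gamma (1-a) * t ^ (a-1)) := by
              have := Fr_nonneg h
              nlinarith
          _ = Real.Gamma (1-a) / ‖s‖ * (t ^ s.re * t ^ (a-1)) := by ring
          _ = Real.Gamma (1-a) / ‖s‖ * t ^ (s.re + a - 1) := by
              rw [← Real.rpow_add h]; ring_nf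
    · have : Tendsto (fun t : ℝ => t ^ (s.re + a - 1)) (𝓝[Ici 0] 0) (𝓝 0) := by
        have h := (Real.continuousAt_rpow_const 0 (s.re + a - 1)
          (Or.inr hkey.le)).continuousWithinAt (s := Ici 0)
        have h2 : (0:ℝ) ^ (s.re + a - 1) = 0 := Real.zero_rpow hkey.ne'
        have h3 : Tendsto (fun t : ℝ => t ^ (s.re + a - 1)) (𝓝[Ici 0] 0)
            (𝓝 ((0:ℝ) ^ (s.re + a - 1))) := h
        rwa [h2] at h3
      simpa using (this.const_mul (Real.Gamma (1-a) / ‖s‖))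
  -- limit of G at ⊤
  have hGtop : Tendsto G atTop (𝓝 0) := by
    apply squeeze_zero_norm' (a := fun t => (1 / ‖s‖) * (t ^ s.re * Real.exp (-(1:ℝ) * t)))
    · filter_upwards [Ioi_mem_atTop (1:ℝ)] with t (ht : 1 < t)
      have ht0 : (0:ℝ) < t := lt_trans one_pos ht
      rw [hGnorm t ht0, neg_one_mul]
      have hb := Fr_le_exp ht.le
      have h1 : (0:ℝ) ≤ t ^ s.re := Real.rpow_nonneg ht0.le _
      have h2 : (0:ℝ) < ‖s‖ := by simpa using hs0
      have h3 : t ^ s.re * Fr t ≤ t ^ s.re * Real.exp (-t) := by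
        nlinarith [Fr_nonneg ht0]
      rw [div_mul_eq_mul_div, div_eq_mul_inv, one_div, mul_comm (‖s‖⁻¹)]
      exact mul_le_mul_of_nonneg_right h3 (by positivity)
    · have := tendsto_rpow_mul_exp_neg_mul_atTop_nhds_zero s.re 1 one_pos
      simpa using this.const_mul (1 / ‖s‖)
  -- derivative of G on Ioi 0
  have hGderiv : ∀ t ∈ Ioi (0:ℝ), HasDerivAt G (G' t) t := by
    intro t ht
    have ht0 : (0:ℝ) < t := ht
    have htne : (t:ℂ) ≠ 0 := by exact_mod_cast ht0.ne'
    have h1 : HasDerivAt (fun y : ℝ => (y:ℂ)^s / s) ((t:ℂ)^(s-1)) t := by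
      have := hasDerivAt_ofReal_cpow_const' ht0.ne' (r := s - 1) (by
        intro h
        apply hs0
        have : s = 0 := by linear_combination h
        exact this)
      simpa [sub_add_cancel] using this
    have h2 : HasDerivAt (fun y : ℝ => ((Fr y : ℝ) : ℂ)) (((-(Real.exp (-t) / t) : ℝ)):ℂ) t :=
      (Fr_hasDerivAt ht0).ofReal_comp
    have h3 := h1.mul h2
    have h4 : HasDerivAt G ((t:ℂ)^(s-1) * (Fr t:ℂ) + (t:ℂ)^s / s * ((-(Real.exp (-t) / t) : ℝ):ℂ)) t := by
      refine h3.congr_of_eventuallyEq ?_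
      filter_upwards [Ioi_mem_nhds ht0] with y (hy : 0 < y)
      simp [hGdef, if_pos hy]
    convert h4 using 1
    have hts : (t:ℂ)^(s-1) = (t:ℂ)^s / t := by
      rw [Complex.cpow_sub _ _ htne, Complex.cpow_one]
    simp only [hG'def]
    push_cast
    rw [hts]
    field_simp
    ring
  -- FTC
  have hFTC := integral_Ioi_of_hasDerivAt_of_tendsto hG0 hGderiv hG'int hGtop
  have hG00 : G 0 = 0 := by simp [hGdef]
  rw [hG00, sub_zero] at hFTC
  have hsub := integral_sub (mellin_integrable hs) hgamma
  rw [hG'def] at hFTC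
  have : ∫ t : ℝ in Ioi 0, (t:ℂ)^(s-1) * (Fr t:ℂ)
      = ∫ t : ℝ in Ioi 0, (t:ℂ)^(s-1) * Real.exp (-t) / s := by
    have := hsub.symm.trans hFTC
    rwa [sub_eq_zero] at this
  rw [this, Complex.Gamma_eq_integral hs, Complex.GammaIntegral]
  rw [← integral_div]
  congr 1
  ext t
  push_cast
  ring
lemma abs_Gamma_le {z : ℂ} (hz : 0 < z.re) :
    ‖Complex.Gamma z‖ ≤ Real.Gamma z.re := by
  rw [Complex.Gamma_eq_integral hz, Complex.GammaIntegral, Real.Gamma_eq_integral hz]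
  refine (norm_integral_le_integral_norm _).trans (le_of_eq ?_)
  refine setIntegral_congr_fun measurableSet_Ioi fun t ht => ?_
  rw [norm_mul, Complex.norm_real, Real.norm_eq_abs, abs_of_pos (Real.exp_pos _),
    Complex.norm_cpow_eq_rpow_re_of_pos ht, Complex.sub_re,
    Complex.one_re]

lemma integrable_inv_sq_add {c : ℝ} (hc : 0 < c) :
    Integrable fun y : ℝ => (c^2 + y^2)⁻¹ := by
  have h1 : Integrable fun y : ℝ => (1 + (y/c)^2)⁻¹ :=
    integrable_inv_one_add_sq.comp_div hc.ne'
  have h2 := (h1.const_mul (c^2)⁻¹)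
  refine h2.congr (ae_of_all _ fun y => ?_)
  show (c^2)⁻¹ * (1 + (y/c)^2)⁻¹ = (c^2 + y^2)⁻¹
  rw [← mul_inv]
  congr 1
  field_simp

lemma vertical_integrable {c : ℝ} (hc : 0 < c) :
    Integrable fun y : ℝ => Complex.Gamma (c + y*Complex.I) / (c + y*Complex.I) := by
  have hne : ∀ y : ℝ, ((c : ℂ) + y*Complex.I) ≠ 0 := by
    intro y h
    have := congrArg Complex.re h
    simp at this
    exact hc.ne' this
  have hre : ∀ y : ℝ, ((c:ℂ) + y*Complex.I).re = c := by intro y; simp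
  have hcont : Continuous fun y : ℝ => Complex.Gamma ((c:ℂ) + y*Complex.I) / ((c:ℂ) + y*Complex.I) := by
    have hline : Continuous fun y : ℝ => (c:ℂ) + y*Complex.I := by continuity
    refine Continuous.div ?_ hline hne
    rw [continuous_iff_continuousAt]
    intro y
    refine (Complex.differentiableAt_Gamma _ fun m => ?_).continuousAt.comp hline.continuousAt
    intro h
    have := congrArg Complex.re h
    simp at this
    have : c = -(m:ℝ) := by simpa using this
    nlinarith [Nat.cast_nonneg (α := ℝ) m, hc]
  refine Integrable.mono' ((integrable_inv_sq_add hc).const_mul (Real.Gamma (c+2)))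
    hcont.aestronglyMeasurable (ae_of_all _ fun y => ?_)
  set s : ℂ := (c:ℂ) + y*Complex.I with hs_def
  have hs0 : s ≠ 0 := hne y
  have hs1 : s + 1 ≠ 0 := by
    intro h
    have := congrArg Complex.re h
    simp [hs_def] at this
    nlinarith
  have hrel : Complex.Gamma s / s = Complex.Gamma (s+2) / (s * s * (s+1)) := by
    have h1 : Complex.Gamma (s+1) = s * Complex.Gamma s := Complex.Gamma_add_one s hs0
    have h2 : Complex.Gamma (s+2) = (s+1) * Complex.Gamma (s+1) := by
      have := Complex.Gamma_add_one (s+1) hs1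
      rw [show s + 1 + 1 = s + 2 by ring] at this
      exact this
    rw [h2, h1]
    field_simp
  rw [hrel]
  rw [norm_div, norm_mul, norm_mul]
  have habs : ‖Complex.Gamma (s+2)‖ ≤ Real.Gamma (c+2) := by
    have : (s+2).re = c + 2 := by simp [hs_def]
    have h := abs_Gamma_le (z := s+2) (by rw [this]; linarith)
    rw [this] at h
    exact h
  have hsq : ‖s‖ * ‖s‖ = c^2 + y^2 := by
    rw [← sq, Complex.sq_norm]
    simp [hs_def, Complex.normSq_apply]
    ring
  have h1le : (1:ℝ) ≤ ‖s+1‖ := by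
    have : (s+1).re = c + 1 := by simp [hs_def]
    have h := Complex.abs_re_le_norm (s+1)
    rw [this] at h
    have : c + 1 ≤ |c+1| := le_abs_self _
    linarith [abs_nonneg (c+1)]
  have hpos : (0:ℝ) < c^2 + y^2 := by positivity
  have hG2 : (0:ℝ) ≤ ‖Complex.Gamma (s+2)‖ := norm_nonneg _
  have hGpos : (0:ℝ) ≤ Real.Gamma (c+2) := hG2.trans habs
  calc ‖Complex.Gamma (s+2)‖ / (‖s‖ * ‖s‖ * ‖s+1‖)
      ≤ Real.Gamma (c+2) / ((c^2+y^2) * 1) := by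
        refine div_le_div₀ hGpos habs (by positivity) ?_
        rw [hsq]
        nlinarith
    _ = Real.Gamma (c+2) * (c^2+y^2)⁻¹ := by rw [mul_one, div_eq_mul_inv]

end EiAux

/-- The exponential integral: for `y < 0`, `Ei y = -∫_{-y}^∞ e^{-t}/t dt`. -/
noncomputable def Ei (y : ℝ) : ℝ := -∫ t in Ioi (-y), Real.exp (-t) / t

/-- Mellin–Barnes representation of the exponential integral: for `x > 0` and
any `c > 0`, `Ei(-x) = -(1/(2πi)) ∫_{c-i∞}^{c+i∞} x^{-s} Γ(s)/s ds`, where the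
contour integral along the vertical line `Re s = c` is parametrized as
`s = c + it`, `ds = i dt`. -/
theorem Ei_mellinBarnes (x : ℝ) (hx : 0 < x) (c : ℝ) (hc : 0 < c) :
    (Ei (-x) : ℂ) =
      -(1 / (2 * Real.pi * Complex.I)) *
        ∫ t : ℝ, (x : ℂ) ^ (-(c + t * Complex.I)) *
          Complex.Gamma (c + t * Complex.I) / (c + t * Complex.I) * Complex.I := by
  set f : ℝ → ℂ := fun t => ((EiAux.Fr t : ℝ) : ℂ) with hf_def
  have hmel : ∀ s : ℂ, 0 < s.re → mellin f s = Complex.Gamma s / s := by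
    intro s hs
    rw [mellin]
    simp_rw [hf_def, smul_eq_mul]
    exact EiAux.mellin_value hs
  have hre : ∀ t : ℝ, ((c:ℂ) + t * Complex.I).re = c := by intro t; simp
  have hconv : MellinConvergent f (c : ℂ) := by
    have := EiAux.mellin_integrable (s := (c:ℂ)) (by simpa using hc)
    simpa [MellinConvergent, hf_def, smul_eq_mul] using this
  have hvert : Complex.VerticalIntegrable (mellin f) c := by
    refine (EiAux.vertical_integrable hc).congr (ae_of_all _ fun y => ?_)
    exact (hmel _ (by rw [hre]; exact hc)).symm
  have hcontf : ContinuousAt f x :=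
    Complex.continuous_ofReal.continuousAt.comp (EiAux.Fr_hasDerivAt hx).continuousAt
  have hinv := mellinInv_mellin_eq c f hx hconv hvert hcontf
  rw [mellinInv] at hinv
  have hint : (∫ y : ℝ, (x:ℂ)^(-((c:ℂ)+(y:ℂ)*Complex.I)) • mellin f ((c:ℂ)+(y:ℂ)*Complex.I))
      = ∫ y : ℝ, (x:ℂ)^(-((c:ℂ)+(y:ℂ)*Complex.I)) *
        Complex.Gamma ((c:ℂ)+(y:ℂ)*Complex.I) / ((c:ℂ)+(y:ℂ)*Complex.I) := by
    congr 1
    funext y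
    rw [smul_eq_mul, hmel _ (by rw [hre]; exact hc), mul_div_assoc]
  rw [hint] at hinv
  have hEi : (Ei (-x) : ℂ) = -f x := by
    rw [Ei, neg_neg, hf_def]
    push_cast [EiAux.Fr]
    ring
  rw [hEi]
  rw [MeasureTheory.integral_mul_const]
  have hπ : (Real.pi : ℂ) ≠ 0 := by exact_mod_cast Real.pi_ne_zero
  have hI : Complex.I ≠ 0 := Complex.I_ne_zero
  have h2 : ((2:ℝ) * Real.pi : ℂ) ≠ 0 := by
    push_cast; exact mul_ne_zero two_ne_zero hπ
  -- from hinv : (1/(2π)) • ∫ = f x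
  have hval : (∫ y : ℝ, (x:ℂ)^(-((c:ℂ)+(y:ℂ)*Complex.I)) *
      Complex.Gamma ((c:ℂ)+(y:ℂ)*Complex.I) / ((c:ℂ)+(y:ℂ)*Complex.I))
      = (2 * Real.pi : ℝ) * f x := by
    rw [← hinv, Complex.real_smul, ← mul_assoc, ← Complex.ofReal_mul, mul_one_div,
      div_self (ne_of_gt (by positivity : (0:ℝ) < 2 * Real.pi)), Complex.ofReal_one, one_mul]
  rw [hval]
  field_simp [hπ, hI]
  push_cast
  ring
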